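/- arXiv:1710.10517 — 5 statements merged into one kernel-verified Lean document; each statement's English description precedes it below -/
import Mathlib

section
/- There exists a constant C > 0 such that for all real x ≥ 2, |∑_{n ≤ x} φ(n) − 3x²/π²| ≤ C·x·log x. -/
open Finset ArithmeticFunction Real
open scoped LSeries.notation
open scoped ArithmeticFunction.Moebius

lemma aux_totient_eq (n : ℕ) (hn : 0 < n) :
    (Nat.totient n : ℝ) = ∑ x ∈ n.divisorsAntidiagonal, (μ x.1 : ℝ) * x.2 := by
  have h := (ArithmeticFunction.sum_eq_iff_sum_mul_moebius_eq
      (R := ℝ) (f := fun n => (Nat.totient n : ℝ)) (g := fun n => (n : ℝ))).mp ?_ n hn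
  · exact h.symm
  · intro n hn
    exact_mod_cast congrArg (Nat.cast : ℕ → ℝ) (Nat.sum_totient n)

lemma aux_swap (N : ℕ) (F : ℕ → ℕ → ℝ) :
    ∑ n ∈ Icc 1 N, ∑ x ∈ n.divisorsAntidiagonal, F x.1 x.2
      = ∑ d ∈ Icc 1 N, ∑ q ∈ Icc 1 (N / d), F d q := by
  rw [Finset.sum_sigma', Finset.sum_sigma']
  refine Finset.sum_nbij' (fun x => ⟨x.2.1, x.2.2⟩) (fun x => ⟨x.1 * x.2, (x.1, x.2)⟩)
    ?_ ?_ ?_ ?_ ?_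
  · rintro ⟨n, d, q⟩ h
    simp only [Finset.mem_sigma, Finset.mem_Icc, Nat.mem_divisorsAntidiagonal] at h ⊢
    obtain ⟨⟨hn1, hnN⟩, hdq, hn0⟩ := h
    have hdq0 : d * q ≠ 0 := by rw [hdq]; exact hn0
    obtain ⟨hd0, hq0⟩ := mul_ne_zero_iff.mp hdq0
    have hd : 0 < d := Nat.pos_of_ne_zero hd0
    have hq : 0 < q := Nat.pos_of_ne_zero hq0
    refine ⟨⟨hd, ?_⟩, hq, ?_⟩
    · calc d ≤ d * q := Nat.le_mul_of_pos_right d hq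
      _ = n := hdq
      _ ≤ N := hnN
    · rw [Nat.le_div_iff_mul_le hd, mul_comm, hdq]; exact hnN
  · rintro ⟨d, q⟩ h
    simp only [Finset.mem_sigma, Finset.mem_Icc, Nat.mem_divisorsAntidiagonal] at h ⊢
    obtain ⟨⟨hd1, hdN⟩, hq1, hq2⟩ := h
    rw [Nat.le_div_iff_mul_le (by omega)] at hq2
    refine ⟨⟨Nat.mul_pos (by omega) (by omega), by rw [mul_comm] at hq2; exact hq2⟩, ?_⟩
    · exact ⟨trivial, by positivity⟩
  · rintro ⟨n, d, q⟩ h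
    simp only [Finset.mem_sigma, Finset.mem_Icc, Nat.mem_divisorsAntidiagonal] at h
    obtain ⟨-, hdq, -⟩ := h
    subst hdq
    rfl
  · rintro ⟨d, q⟩ _
    rfl
  · rintro ⟨n, d, q⟩ _
    rfl

lemma aux_gauss (m : ℕ) : ∑ q ∈ Icc 1 m, (q : ℝ) = m * (m + 1) / 2 := by
  induction m with
  | zero => simp
  | succ m ih =>
    rw [Finset.sum_Icc_succ_top (by omega), ih]
    push_cast
    ring

lemma aux_summable_moebius : Summable (fun n : ℕ => (μ n : ℝ) / (n : ℝ) ^ 2) := by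
  refine Summable.of_abs (Summable.of_nonneg_of_le (fun n => abs_nonneg _) (fun n => ?_)
    (Real.summable_one_div_nat_pow.mpr one_lt_two))
  rcases Nat.eq_zero_or_pos n with rfl | hn
  · simp
  rw [abs_div, abs_pow, Nat.abs_cast]
  have h1 : |(μ n : ℝ)| ≤ 1 := by exact_mod_cast ArithmeticFunction.abs_moebius_le_one (n := n)
  gcongr

lemma aux_tsum_moebius : ∑' n : ℕ, (μ n : ℝ) / (n : ℝ) ^ 2 = 6 / π ^ 2 := by
  have hmul := ArithmeticFunction.LSeries_zeta_mul_Lseries_moebius (s := 2) (by norm_num)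
  rw [ArithmeticFunction.LSeries_zeta_eq_riemannZeta (by norm_num), riemannZeta_two] at hmul
  have hpi : ((π : ℝ) : ℂ) ^ 2 / 6 ≠ 0 := by
    simp [Real.pi_ne_zero]
  have hL : L ↗μ 2 = 6 / (π : ℂ) ^ 2 := by
    have h := congrArg (fun z => (((π : ℂ) ^ 2 / 6)⁻¹ * z)) hmul
    simp only [← mul_assoc, inv_mul_cancel₀ hpi, one_mul, mul_one] at h
    rw [h, inv_div]
  have hterm : ∀ n : ℕ, ((((μ n : ℝ) / (n : ℝ) ^ 2) : ℝ) : ℂ) = LSeries.term ↗μ 2 n := by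
    intro n
    rcases Nat.eq_zero_or_pos n with rfl | hn
    · simp [LSeries.term]
    · rw [LSeries.term_of_ne_zero hn.ne']
      push_cast
      norm_num
  have this1 := @Complex.ofReal_tsum ℕ (SummationFilter.unconditional ℕ) (fun n : ℕ => (μ n : ℝ) / (n : ℝ) ^ 2)
  rw [tsum_congr hterm] at this1
  have h2 : ((∑' n : ℕ, (μ n : ℝ) / (n : ℝ) ^ 2 : ℝ) : ℂ) = ((6 : ℝ) / π ^ 2 : ℝ) := by
    rw [this1]
    have hls : ∑' n : ℕ, LSeries.term ↗μ 2 n = L ↗μ 2 := rfl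
    rw [hls, hL]
    push_cast
    ring
  exact_mod_cast h2

lemma aux_sq_sum (N M : ℕ) (hN : 0 < N) :
    ∑ i ∈ range M, (((i : ℝ) + (N:ℝ) + 1) ^ 2)⁻¹ ≤ 1 / (N:ℝ) - 1 / ((N:ℝ) + (M:ℝ)) := by
  induction M with
  | zero => simp
  | succ M ih =>
    rw [Finset.sum_range_succ]
    have hNR : (0:ℝ) < N := by exact_mod_cast hN
    have key : (((M : ℝ) + (N:ℝ) + 1) ^ 2)⁻¹ ≤ 1 / ((N:ℝ) + (M:ℝ)) - 1 / ((N:ℝ) + ((M:ℝ)+1)) := by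
      rw [div_sub_div _ _ (by positivity) (by positivity), le_div_iff₀ (by positivity),
        ← one_div, one_div_mul_eq_div, div_le_iff₀ (by positivity)]
      nlinarith [hNR, (Nat.cast_nonneg M : (0:ℝ) ≤ M)]
    push_cast
    push_cast at ih
    linarith

lemma aux_sq_tail (N : ℕ) (hN : 0 < N) :
    ∑' i : ℕ, (((i : ℝ) + (N:ℝ) + 1) ^ 2)⁻¹ ≤ 1 / (N:ℝ) := by
  have hsum : Summable (fun i : ℕ => (((i : ℝ) + (N:ℝ) + 1) ^ 2)⁻¹) := by
    have := (summable_nat_add_iff (f := fun n : ℕ => ((n : ℝ) ^ 2)⁻¹) (N + 1)).mpr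
      (Real.summable_nat_pow_inv.mpr one_lt_two)
    refine this.congr fun i => ?_
    push_cast
    ring_nf
  refine Summable.tsum_le_of_sum_le hsum fun s => ?_
  obtain ⟨M, hM⟩ := s.exists_nat_subset_range
  calc ∑ i ∈ s, (((i : ℝ) + (N:ℝ) + 1) ^ 2)⁻¹
      ≤ ∑ i ∈ range M, (((i : ℝ) + (N:ℝ) + 1) ^ 2)⁻¹ :=
        Finset.sum_le_sum_of_subset_of_nonneg hM (fun i _ _ => by positivity)
  _ ≤ 1 / (N:ℝ) - 1 / ((N:ℝ) + (M:ℝ)) := aux_sq_sum N M hN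
  _ ≤ 1 / (N:ℝ) := by
      have : (0:ℝ) ≤ 1 / ((N:ℝ) + (M:ℝ)) := by positivity
      linarith

lemma aux_abs_moebius_div (k : ℕ) : |(μ k : ℝ) / (k : ℝ) ^ 2| ≤ ((k:ℝ) ^ 2)⁻¹ := by
  rcases Nat.eq_zero_or_pos k with rfl | hk
  · simp
  rw [abs_div, abs_pow, Nat.abs_cast, div_eq_mul_inv]
  have h1 : |(μ k : ℝ)| ≤ 1 := by exact_mod_cast ArithmeticFunction.abs_moebius_le_one (n := k)
  calc |(μ k : ℝ)| * ((k:ℝ)^2)⁻¹ ≤ 1 * ((k:ℝ)^2)⁻¹ := by gcongr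
  _ = ((k:ℝ)^2)⁻¹ := one_mul _

lemma aux_partial (N : ℕ) (hN : 0 < N) :
    |∑ d ∈ Icc 1 N, (μ d : ℝ) / (d : ℝ) ^ 2 - 6 / π ^ 2| ≤ 1 / (N:ℝ) := by
  set f : ℕ → ℝ := fun n => (μ n : ℝ) / (n : ℝ) ^ 2 with hf
  have h1 : ∑ d ∈ range (N+1), f d = ∑ d ∈ Icc 1 N, f d := by
    rw [← Finset.Ico_add_one_right_eq_Icc, Finset.range_eq_Ico,
      Finset.sum_eq_sum_Ico_succ_bot (Nat.succ_pos N) f]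
    simp [hf]
  have h2 := Summable.sum_add_tsum_nat_add (N+1) aux_summable_moebius
  rw [aux_tsum_moebius] at h2
  have h3 : ∑ d ∈ Icc 1 N, f d - 6 / π ^ 2 = -(∑' i : ℕ, f (i + (N+1))) := by
    rw [← h1]; linarith [h2]
  rw [h3, abs_neg]
  have hsumshift : Summable (fun i : ℕ => f (i + (N+1))) :=
    (summable_nat_add_iff (N+1)).mpr aux_summable_moebius
  have hsumabs : Summable (fun i : ℕ => ‖f (i + (N+1))‖) := hsumshift.abs
  have hsq : Summable (fun i : ℕ => (((i : ℝ) + (N:ℝ) + 1) ^ 2)⁻¹) := by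
    have := (summable_nat_add_iff (f := fun n : ℕ => ((n : ℝ) ^ 2)⁻¹) (N + 1)).mpr
      (Real.summable_nat_pow_inv.mpr one_lt_two)
    refine this.congr fun i => ?_
    push_cast
    ring_nf
  calc |∑' i : ℕ, f (i + (N+1))| ≤ ∑' i : ℕ, ‖f (i + (N+1))‖ := norm_tsum_le_tsum_norm hsumabs
  _ ≤ ∑' i : ℕ, (((i : ℝ) + (N:ℝ) + 1) ^ 2)⁻¹ := by
      refine Summable.tsum_le_tsum (fun i => ?_) hsumabs hsq
      have := aux_abs_moebius_div (i + (N+1))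
      rw [Real.norm_eq_abs]
      refine le_of_le_of_eq this ?_; push_cast; ring
  _ ≤ 1 / (N:ℝ) := aux_sq_tail N hN

lemma aux_term_bound (x : ℝ) (d : ℕ) (hd : 1 ≤ d) (hdx : (d:ℝ) ≤ x) :
    |(μ d : ℝ) * (((⌊x⌋₊ / d : ℕ) : ℝ) * (((⌊x⌋₊ / d : ℕ) : ℝ) + 1) / 2
      - x ^ 2 / (2 * (d:ℝ) ^ 2))| ≤ x / d := by
  have hd0 : (0:ℝ) < d := by exact_mod_cast hd
  set t : ℝ := x / d with ht
  have ht1 : 1 ≤ t := (one_le_div hd0).mpr hdx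
  have ht0 : 0 ≤ t := by linarith
  have hm : (⌊x⌋₊ / d : ℕ) = ⌊t⌋₊ := (Nat.floor_div_natCast x d).symm
  rw [hm]
  have hmt : (⌊t⌋₊ : ℝ) ≤ t := Nat.floor_le ht0
  have htm : t < (⌊t⌋₊ : ℝ) + 1 := Nat.lt_floor_add_one t
  have hx2 : x ^ 2 / (2 * (d:ℝ) ^ 2) = t ^ 2 / 2 := by
    rw [ht, div_pow, div_div, mul_comm]
  rw [hx2, abs_mul]
  have h1 : |(μ d : ℝ)| ≤ 1 := by exact_mod_cast ArithmeticFunction.abs_moebius_le_one (n := d)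
  have h2 : |(⌊t⌋₊ : ℝ) * ((⌊t⌋₊ : ℝ) + 1) / 2 - t ^ 2 / 2| ≤ t := by
    rw [abs_le]
    constructor
    · nlinarith [sq_nonneg ((⌊t⌋₊ : ℝ) - t), sq_nonneg ((⌊t⌋₊ : ℝ) + 1 - t)]
    · nlinarith [sq_nonneg ((⌊t⌋₊ : ℝ) - t), sq_nonneg ((⌊t⌋₊ : ℝ) + 1 - t)]
  calc |(μ d : ℝ)| * |(⌊t⌋₊ : ℝ) * ((⌊t⌋₊ : ℝ) + 1) / 2 - t ^ 2 / 2|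
      ≤ 1 * t := by
        apply mul_le_mul h1 h2 (abs_nonneg _) zero_le_one
  _ = t := one_mul t

theorem totient_partial_sum_error :
    ∃ C : ℝ, 0 < C ∧ ∀ x : ℝ, 2 ≤ x →
      |(∑ n ∈ Finset.Icc 1 ⌊x⌋₊, (Nat.totient n : ℝ)) - 3 * x ^ 2 / Real.pi ^ 2|
        ≤ C * x * Real.log x := by
  refine ⟨5, by norm_num, fun x hx => ?_⟩
  have hx0 : (0:ℝ) < x := by linarith
  set N := ⌊x⌋₊ with hNdef
  have hN2 : 2 ≤ N := Nat.le_floor (by exact_mod_cast hx)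
  have hN0 : 0 < N := by omega
  have hNx : (N:ℝ) ≤ x := Nat.floor_le (by linarith)
  have hxN1 : x < (N:ℝ) + 1 := Nat.lt_floor_add_one x
  -- Step 1 : exact identity
  have eq1 : ∑ n ∈ Icc 1 N, (Nat.totient n : ℝ)
      = ∑ d ∈ Icc 1 N, (μ d : ℝ) * (((N / d : ℕ) : ℝ) * (((N / d : ℕ) : ℝ) + 1) / 2) := by
    rw [Finset.sum_congr rfl (fun n hn => aux_totient_eq n (by
      simp only [Finset.mem_Icc] at hn; omega)),
      aux_swap N (fun d q => (μ d : ℝ) * q)]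
    refine Finset.sum_congr rfl fun d _ => ?_
    rw [← Finset.mul_sum, aux_gauss]
  -- split
  set P : ℝ := ∑ d ∈ Icc 1 N, (μ d : ℝ) / (d : ℝ) ^ 2 with hP
  set T1 : ℝ := ∑ d ∈ Icc 1 N, (μ d : ℝ) * (((N / d : ℕ) : ℝ) * (((N / d : ℕ) : ℝ) + 1) / 2
      - x ^ 2 / (2 * (d:ℝ) ^ 2)) with hT1
  have e2 : ∑ d ∈ Icc 1 N, (μ d : ℝ) * (x ^ 2 / (2 * (d:ℝ) ^ 2)) = x ^ 2 / 2 * P := by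
    rw [hP, Finset.mul_sum]
    refine Finset.sum_congr rfl fun d hd => ?_
    simp only [Finset.mem_Icc] at hd
    have hd0 : (d:ℝ) ≠ 0 := by
      have : 1 ≤ d := hd.1
      positivity
    field_simp
  have split : (∑ n ∈ Icc 1 N, (Nat.totient n : ℝ)) - 3 * x ^ 2 / π ^ 2
      = T1 + x ^ 2 / 2 * (P - 6 / π ^ 2) := by
    have e1 : T1 = (∑ d ∈ Icc 1 N, (μ d : ℝ) * (((N / d : ℕ) : ℝ) * (((N / d : ℕ) : ℝ) + 1) / 2))
        - ∑ d ∈ Icc 1 N, (μ d : ℝ) * (x ^ 2 / (2 * (d:ℝ) ^ 2)) := by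
      rw [hT1, ← Finset.sum_sub_distrib]
      exact Finset.sum_congr rfl fun d _ => by ring
    rw [eq1, e1, e2]
    ring
  -- bounds
  have hb1 : |T1| ≤ x * (1 + Real.log x) := by
    calc |T1| ≤ ∑ d ∈ Icc 1 N, |(μ d : ℝ) * (((N / d : ℕ) : ℝ) * (((N / d : ℕ) : ℝ) + 1) / 2
        - x ^ 2 / (2 * (d:ℝ) ^ 2))| := Finset.abs_sum_le_sum_abs _ _
    _ ≤ ∑ d ∈ Icc 1 N, x / d := by
        refine Finset.sum_le_sum fun d hd => ?_
        simp only [Finset.mem_Icc] at hd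
        have hdx : (d:ℝ) ≤ x := le_trans (by exact_mod_cast hd.2) hNx
        exact aux_term_bound x d hd.1 hdx
    _ = x * ∑ d ∈ Icc 1 N, ((d:ℝ))⁻¹ := by
        rw [Finset.mul_sum]
        exact Finset.sum_congr rfl fun d _ => div_eq_mul_inv x _
    _ = x * ((harmonic N : ℝ)) := by
        rw [harmonic_eq_sum_Icc]
        push_cast
        ring
    _ ≤ x * (1 + Real.log N) := by
        have := harmonic_le_one_add_log N
        gcongr
    _ ≤ x * (1 + Real.log x) := by
        have hlog : Real.log (N:ℝ) ≤ Real.log x := Real.log_le_log (by positivity) hNx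
        gcongr
  have hb2 : |x ^ 2 / 2 * (P - 6 / π ^ 2)| ≤ x := by
    rw [abs_mul]
    have h1 : |P - 6 / π ^ 2| ≤ 1 / (N:ℝ) := aux_partial N hN0
    have h2 : 1 / (N:ℝ) ≤ 2 / x := by
      rw [div_le_div_iff₀ (by exact_mod_cast hN0) hx0]
      have : (1:ℝ) ≤ N := by exact_mod_cast hN0
      linarith
    have h3 : |x ^ 2 / 2| = x ^ 2 / 2 := abs_of_nonneg (by positivity)
    calc |x ^ 2 / 2| * |P - 6 / π ^ 2| ≤ (x ^ 2 / 2) * (2 / x) := by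
          rw [h3]; exact mul_le_mul_of_nonneg_left (h1.trans h2) (by positivity)
    _ = x := by field_simp
  -- conclude
  have hlog2 : (1:ℝ) / 2 ≤ Real.log x := by
    have h2 : Real.log 2 ≤ Real.log x := Real.log_le_log (by norm_num) hx
    have := Real.log_two_gt_d9
    linarith
  calc |(∑ n ∈ Icc 1 N, (Nat.totient n : ℝ)) - 3 * x ^ 2 / π ^ 2|
      ≤ |T1| + |x ^ 2 / 2 * (P - 6 / π ^ 2)| := by
        rw [split]; exact abs_add_le _ _
  _ ≤ x * (1 + Real.log x) + x := add_le_add hb1 hb2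
  _ = x * (2 + Real.log x) := by ring
  _ ≤ x * (5 * Real.log x) := by
      have : 2 + Real.log x ≤ 5 * Real.log x := by linarith
      gcongr
  _ = 5 * x * Real.log x := by ring
end

section
/- The average order of Euler's totient function is 3n/π²: that is, (1/x)·∑_{n ≤ x} φ(n) is asymptotic to 3x/π² as x → ∞, i.e., the limit of (∑_{n ≤ x} φ(n))/(x²) as x → ∞ equals 3/π². -/
open Filter Finset ArithmeticFunction Topology

private lemma moebius_real_tsum :
    ∑' d : ℕ, ((moebius d : ℤ) : ℝ) / (d : ℝ) ^ 2 = 6 / Real.pi ^ 2 := by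
  have hs : (1 : ℝ) < (2 : ℂ).re := by norm_num
  have h1 : LSeries (fun n => ((zeta n : ℕ) : ℂ)) 2 *
      LSeries (fun n => ((moebius n : ℤ) : ℂ)) 2 = 1 :=
    ArithmeticFunction.LSeries_zeta_mul_Lseries_moebius hs
  have hz : LSeries (fun n => ((zeta n : ℕ) : ℂ)) 2 = (Real.pi : ℂ) ^ 2 / 6 := by
    rw [ArithmeticFunction.LSeries_zeta_eq_riemannZeta hs, riemannZeta_two]
  have hpi : ((Real.pi : ℂ)) ^ 2 ≠ 0 := by
    simpa using Complex.ofReal_ne_zero.mpr Real.pi_ne_zero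
  have hmu : LSeries (fun n => ((moebius n : ℤ) : ℂ)) 2 = 6 / (Real.pi : ℂ) ^ 2 := by
    rw [hz] at h1
    field_simp at h1 ⊢
    linear_combination h1
  have key : ((∑' d : ℕ, ((moebius d : ℤ) : ℝ) / (d : ℝ) ^ 2 : ℝ) : ℂ)
      = ((6 / Real.pi ^ 2 : ℝ) : ℂ) := by
    rw [Complex.ofReal_tsum]
    have hterm : ∀ n : ℕ, ((((moebius n : ℤ) : ℝ) / (n : ℝ) ^ 2 : ℝ) : ℂ)
        = LSeries.term (fun n => ((moebius n : ℤ) : ℂ)) 2 n := by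
      intro n
      rcases eq_or_ne n 0 with rfl | hn
      · simp [LSeries.term]
      · rw [LSeries.term_def, if_neg hn]
        rw [show ((n : ℂ) ^ (2 : ℂ)) = (n : ℂ) ^ (2 : ℕ) by
          rw [← Complex.cpow_natCast]; norm_num]
        push_cast
        ring
    rw [tsum_congr hterm, ← LSeries, hmu]
    push_cast
    ring
  exact Complex.ofReal_injective key

private lemma gauss_real (k : ℕ) : ∑ m ∈ Icc 1 k, (m : ℝ) = k * (k + 1) / 2 := by
  induction k with
  | zero => simp
  | succ n ih =>
    rw [Finset.sum_Icc_succ_top (by omega), ih]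
    push_cast
    ring

private lemma swap_div_sum (N : ℕ) (F : ℕ × ℕ → ℝ) :
    ∑ n ∈ Icc 1 N, ∑ p ∈ n.divisorsAntidiagonal, F p
      = ∑ d ∈ Icc 1 N, ∑ m ∈ Icc 1 (N / d), F (d, m) := by
  have hdisj : (↑(Icc 1 N) : Set ℕ).PairwiseDisjoint Nat.divisorsAntidiagonal := by
    intro a _ b _ hab
    simp only [Function.onFun, Finset.disjoint_left]
    intro p hpa hpb
    rw [Nat.mem_divisorsAntidiagonal] at hpa hpb
    exact hab (hpa.1 ▸ hpb.1 ▸ rfl)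
  rw [← Finset.sum_biUnion hdisj]
  refine Finset.sum_finset_product _ _ _ ?_
  intro p
  simp only [Finset.mem_biUnion, Nat.mem_divisorsAntidiagonal, Finset.mem_Icc]
  constructor
  · rintro ⟨n, ⟨hn1, hn2⟩, hpn, -⟩
    subst hpn
    have hp1 : 1 ≤ p.1 := by
      rcases Nat.eq_zero_or_pos p.1 with h | h
      · rw [h, Nat.zero_mul] at hn1; omega
      · exact h
    have hp2 : 1 ≤ p.2 := by
      rcases Nat.eq_zero_or_pos p.2 with h | h
      · rw [h, Nat.mul_zero] at hn1; omega
      · exact h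
    refine ⟨⟨hp1, le_trans (Nat.le_mul_of_pos_right _ hp2) hn2⟩, hp2, ?_⟩
    rw [Nat.le_div_iff_mul_le (by omega : 0 < p.1)]
    rw [Nat.mul_comm]; exact hn2
  · rintro ⟨⟨hp1, hp1N⟩, hm1, hmN⟩
    rw [Nat.le_div_iff_mul_le (by omega : 0 < p.1)] at hmN
    refine ⟨p.1 * p.2, ⟨?_, by rw [Nat.mul_comm]; exact hmN⟩, rfl, ?_⟩
    · exact Nat.one_le_iff_ne_zero.mpr (Nat.mul_ne_zero (by omega) (by omega))
    · exact Nat.mul_ne_zero (by omega) (by omega)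

private lemma totient_sum_eq (N : ℕ) :
    ∑ n ∈ Icc 1 N, (Nat.totient n : ℝ)
      = ∑ d ∈ Icc 1 N, ((moebius d : ℤ) : ℝ)
          * (((N / d : ℕ) : ℝ) * (((N / d : ℕ) : ℝ) + 1) / 2) := by
  have inv : ∀ n > 0, ∑ x ∈ n.divisorsAntidiagonal, ((moebius x.1 : ℤ) : ℝ) * ((x.2 : ℕ) : ℝ)
      = (Nat.totient n : ℝ) := by
    refine (ArithmeticFunction.sum_eq_iff_sum_mul_moebius_eq
      (f := fun n => (Nat.totient n : ℝ)) (g := fun n => (n : ℝ))).mp ?_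
    intro n _
    exact_mod_cast congrArg (Nat.cast : ℕ → ℝ) (Nat.sum_totient n)
  calc ∑ n ∈ Icc 1 N, (Nat.totient n : ℝ)
      = ∑ n ∈ Icc 1 N, ∑ p ∈ n.divisorsAntidiagonal,
          ((moebius p.1 : ℤ) : ℝ) * ((p.2 : ℕ) : ℝ) := by
        refine Finset.sum_congr rfl fun n hn => ?_
        rw [Finset.mem_Icc] at hn
        exact (inv n (by omega)).symm
    _ = ∑ d ∈ Icc 1 N, ∑ m ∈ Icc 1 (N / d), ((moebius d : ℤ) : ℝ) * ((m : ℕ) : ℝ) :=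
        swap_div_sum N (fun p => ((moebius p.1 : ℤ) : ℝ) * ((p.2 : ℕ) : ℝ))
    _ = _ := by
        refine Finset.sum_congr rfl fun d _ => ?_
        rw [← Finset.mul_sum, gauss_real]

private noncomputable def totF (x : ℝ) (d : ℕ) : ℝ :=
  if d ∈ Icc 1 ⌊x⌋₊ then
    ((moebius d : ℤ) : ℝ) * (((⌊x⌋₊ / d : ℕ) : ℝ) * (((⌊x⌋₊ / d : ℕ) : ℝ) + 1) / 2) / x ^ 2
  else 0

open Filter in
theorem totient_average_order :
    Tendsto (fun x : ℝ => (∑ n ∈ Finset.Icc 1 ⌊x⌋₊, (Nat.totient n : ℝ)) / x ^ 2)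
      atTop (nhds (3 / Real.pi ^ 2)) := by
  have hsum : Summable (fun d : ℕ => (1 : ℝ) / (d : ℝ) ^ 2) :=
    Real.summable_one_div_nat_pow.mpr one_lt_two
  set g : ℕ → ℝ := fun d => ((moebius d : ℤ) : ℝ) / (d : ℝ) ^ 2 / 2 with hgdef
  -- pointwise convergence
  have hpt : ∀ d : ℕ, Tendsto (fun x => totF x d) atTop (𝓝 (g d)) := by
    intro d
    rcases Nat.eq_zero_or_pos d with rfl | hd
    · have h0 : ∀ x : ℝ, totF x 0 = 0 := fun x => by simp [totF]
      simp only [h0, hgdef, Nat.cast_zero]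
      norm_num
    · have hdR : (0 : ℝ) < d := by exact_mod_cast hd
      have hfl : Tendsto (fun x : ℝ => (⌊x / d⌋₊ : ℝ) / x) atTop (𝓝 (1 / d)) := by
        have h1 : Tendsto (fun x : ℝ => x / d) atTop atTop :=
          tendsto_id.atTop_div_const hdR
        have h2 : Tendsto (fun x : ℝ => (⌊x / d⌋₊ : ℝ) / (x / d)) atTop (𝓝 1) :=
          tendsto_nat_floor_div_atTop.comp h1
        have h3 : Tendsto (fun x : ℝ => (⌊x / d⌋₊ : ℝ) / (x / d) * (1 / d)) atTop
            (𝓝 (1 * (1 / d))) := h2.mul_const _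
        rw [one_mul] at h3
        refine h3.congr' ?_
        filter_upwards [eventually_gt_atTop (0 : ℝ)] with x hx
        field_simp
      have hfl1 : Tendsto (fun x : ℝ => ((⌊x / d⌋₊ : ℝ) + 1) / x) atTop (𝓝 (1 / d)) := by
        have h4 := hfl.add tendsto_inv_atTop_zero
        rw [add_zero] at h4
        refine h4.congr fun x => ?_
        rw [add_div, one_div]
      have hmain := (hfl.mul hfl1).const_mul (((moebius d : ℤ) : ℝ) / 2)
      have hval : g d = ((moebius d : ℤ) : ℝ) / 2 * (1 / d * (1 / d)) := by
        rw [hgdef]; ring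
      rw [← hval] at hmain
      refine Tendsto.congr' ?_ hmain
      filter_upwards [eventually_ge_atTop ((d : ℝ)), eventually_ge_atTop (1 : ℝ)] with x hxd hx1
      have hx0 : (0 : ℝ) < x := lt_of_lt_of_le one_pos hx1
      have hmem : d ∈ Icc 1 ⌊x⌋₊ := Finset.mem_Icc.mpr ⟨hd, Nat.le_floor hxd⟩
      rw [totF, if_pos hmem, ← Nat.floor_div_natCast]
      have hx2 : x ≠ 0 := ne_of_gt hx0
      rw [sq]
      field_simp
  -- uniform bound
  have hbd : ∀ᶠ x : ℝ in atTop, ∀ d : ℕ, ‖totF x d‖ ≤ (1 : ℝ) / (d : ℝ) ^ 2 := by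
    filter_upwards [eventually_ge_atTop (1 : ℝ)] with x hx1 d
    rw [Real.norm_eq_abs]
    by_cases hmem : d ∈ Icc 1 ⌊x⌋₊
    · rw [Finset.mem_Icc] at hmem
      obtain ⟨hd1, hdN⟩ := hmem
      have hx0 : (0 : ℝ) < x := lt_of_lt_of_le one_pos hx1
      have hdR : (1 : ℝ) ≤ (d : ℝ) := by exact_mod_cast hd1
      have hdx : (d : ℝ) ≤ x := le_trans (by exact_mod_cast Nat.cast_le.mpr hdN)
        (Nat.floor_le (le_of_lt hx0))
      set k : ℕ := ⌊x⌋₊ / d with hk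
      have hkd : (k : ℝ) * d ≤ x := by
        have h1 : k * d ≤ ⌊x⌋₊ := Nat.div_mul_le_self _ _
        calc (k : ℝ) * d = ((k * d : ℕ) : ℝ) := by push_cast; ring
          _ ≤ (⌊x⌋₊ : ℝ) := by exact_mod_cast h1
          _ ≤ x := Nat.floor_le (le_of_lt hx0)
      have hk0 : (0 : ℝ) ≤ (k : ℝ) := Nat.cast_nonneg _
      have habs : |totF x d| = |((moebius d : ℤ) : ℝ)|
          * (((k : ℝ) * ((k : ℝ) + 1) / 2) / x ^ 2) := by
        rw [totF, if_pos (Finset.mem_Icc.mpr ⟨hd1, hdN⟩), abs_div, abs_mul]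
        rw [abs_of_nonneg (by positivity : (0:ℝ) ≤ (k : ℝ) * ((k : ℝ) + 1) / 2),
          abs_of_nonneg (by positivity : (0:ℝ) ≤ x ^ 2), mul_div_assoc]
      have hmu : |((moebius d : ℤ) : ℝ)| ≤ 1 := by
        have := ArithmeticFunction.abs_moebius_le_one (n := d)
        exact_mod_cast this
      have hT : ((k : ℝ) * ((k : ℝ) + 1) / 2) / x ^ 2 ≤ 1 / (d : ℝ) ^ 2 := by
        rw [div_le_div_iff₀ (by positivity) (by positivity)]
        have h1 : (k : ℝ) ^ 2 * (d : ℝ) ^ 2 ≤ x ^ 2 := by nlinarith [mul_le_mul hkd hkd (by positivity : (0:ℝ) ≤ (k:ℝ) * d) hx0.le]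
        have h2 : (k : ℝ) * (d : ℝ) ^ 2 ≤ x ^ 2 := by nlinarith
        nlinarith
      calc |totF x d| ≤ 1 * (((k : ℝ) * ((k : ℝ) + 1) / 2) / x ^ 2) := by
            rw [habs]
            exact mul_le_mul_of_nonneg_right hmu (by positivity)
        _ ≤ 1 / (d : ℝ) ^ 2 := by rw [one_mul]; exact hT
    · rw [totF, if_neg hmem, abs_zero]
      positivity
  have hmain := tendsto_tsum_of_dominated_convergence hsum hpt hbd
  have hgsum : ∑' d : ℕ, g d = 3 / Real.pi ^ 2 := by
    have hcong : ∀ d : ℕ, g d = (((moebius d : ℤ) : ℝ) / (d : ℝ) ^ 2) * 2⁻¹ := by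
      intro d; rw [hgdef]; ring
    rw [tsum_congr hcong, tsum_mul_right, moebius_real_tsum]
    ring
  rw [hgsum] at hmain
  refine Tendsto.congr' ?_ hmain
  filter_upwards [eventually_ge_atTop (1 : ℝ)] with x hx1
  have heq : ∑' d : ℕ, totF x d = ∑ d ∈ Icc 1 ⌊x⌋₊, totF x d :=
    tsum_eq_sum (fun d hd => by rw [totF, if_neg hd])
  rw [heq, totient_sum_eq ⌊x⌋₊, Finset.sum_div]
  refine Finset.sum_congr rfl fun d hd => ?_
  rw [totF, if_pos hd]
end

section
/- For every positive integer k, there exist integers a and b such that for all r, s with 1 ≤ r ≤ k and 1 ≤ s ≤ k, gcd(a+r, b+s) > 1; in other words, there is a k×k block of lattice points none of which is visible from the origin. -/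
/-- the prime assigned to the lattice cell `(r,s)` -/
private noncomputable def hfP (i : ℕ × ℕ) : ℕ := Nat.nth Nat.Prime (Nat.pair i.1 i.2)

private lemma hfP_prime (i : ℕ × ℕ) : (hfP i).Prime := Nat.prime_nth_prime _

private lemma hfP_inj : Function.Injective hfP := by
  intro i j h
  have h1 := Nat.nth_injective Nat.infinite_setOf_prime h
  have := Nat.pair_eq_pair.mp h1
  exact Prod.ext this.1 this.2

/-- Hidden forest theorem: arbitrarily large square blocks of lattice points,
none of which is visible from the origin. -/
theorem hidden_forest (k : ℕ) (hk : 0 < k) :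
    ∃ a b : ℤ, ∀ r s : ℤ, 1 ≤ r → r ≤ k → 1 ≤ s → s ≤ k →
      1 < Int.gcd (a + r) (b + s) := by
  classical
  set t : Finset (ℕ × ℕ) := Finset.Icc 1 k ×ˢ Finset.Icc 1 k with ht
  have hs : ∀ i ∈ t, hfP i ≠ 0 := fun i _ => (hfP_prime i).ne_zero
  have pp : Set.Pairwise t (Function.onFun Nat.Coprime hfP) := by
    intro i _ j _ hij
    exact (Nat.coprime_primes (hfP_prime i) (hfP_prime j)).mpr
      (fun h => hij (hfP_inj h))
  obtain ⟨A, hA⟩ := Nat.chineseRemainderOfFinset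
      (fun i => i.1 * (hfP i - 1)) hfP t hs pp
  obtain ⟨B, hB⟩ := Nat.chineseRemainderOfFinset
      (fun i => i.2 * (hfP i - 1)) hfP t hs pp
  refine ⟨(A : ℤ), (B : ℤ), ?_⟩
  intro r s hr1 hrk hs1 hsk
  set i : ℕ × ℕ := (r.toNat, s.toNat) with hi
  have hmem : i ∈ t := by
    simp only [ht, hi, Finset.mem_product, Finset.mem_Icc]
    omega
  set p : ℕ := hfP i with hp
  have hp2 : 2 ≤ p := (hfP_prime i).two_le
  have hrt : (r.toNat : ℤ) = r := Int.toNat_of_nonneg (by omega)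
  have hst : (s.toNat : ℤ) = s := Int.toNat_of_nonneg (by omega)
  -- p divides A + r
  have hda : (p : ℤ) ∣ (A : ℤ) + r := by
    have h1 := (Nat.modEq_iff_dvd.mp (hA i hmem))
    -- (p:ℤ) ∣ ↑(r.toNat * (p - 1)) - ↑A
    have hcast : ((r.toNat * (p - 1) : ℕ) : ℤ) = r * (p - 1) := by
      push_cast [Nat.cast_sub (by omega : 1 ≤ p)]
      rw [hrt]
    rw [hcast] at h1
    obtain ⟨c, hc⟩ := h1
    exact ⟨r - c, by linarith [hc]⟩
  have hdb : (p : ℤ) ∣ (B : ℤ) + s := by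
    have h1 := (Nat.modEq_iff_dvd.mp (hB i hmem))
    have hcast : ((s.toNat * (p - 1) : ℕ) : ℤ) = s * (p - 1) := by
      push_cast [Nat.cast_sub (by omega : 1 ≤ p)]
      rw [hst]
    rw [hcast] at h1
    obtain ⟨c, hc⟩ := h1
    exact ⟨s - c, by linarith [hc]⟩
  have hdvd : (p : ℤ) ∣ (Int.gcd ((A : ℤ) + r) ((B : ℤ) + s) : ℤ) :=
    Int.natCast_dvd_natCast.mpr (Int.dvd_gcd hda hdb)
  have hdvd' : p ∣ Int.gcd ((A : ℤ) + r) ((B : ℤ) + s) :=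
    Int.natCast_dvd_natCast.mp hdvd
  have hpos : 0 < Int.gcd ((A : ℤ) + r) ((B : ℤ) + s) := by
    rw [Int.gcd_pos_iff]
    left
    positivity
  have := Nat.le_of_dvd hpos hdvd'
  omega
end

section
/- For sufficiently large n, given any r = ⌊log n / (2 log log n)⌋ + 1 lattice points in the grid {0,…,n}², there exists a lattice point (x₀,y₀) in the same grid, distinct from all of them, that is not visible from any of the given points. Consequently, any set B of lattice points in the n×n grid from which every grid point is visible satisfies |B| > log n / (2 log log n). -/
set_option maxHeartbeats 1000000

open Real in
lemma abbott_cheby (m : ℕ) (hm : 0 < m) :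
    4 ^ m ≤ (2 * m) ^ (Nat.primeCounting (2 * m) + 1) := by
  have hN : Nat.centralBinom m ≠ 0 := (Nat.centralBinom_pos m).ne'
  have h2m : 0 < 2 * m := by omega
  have hsub : (Nat.centralBinom m).factorization.support ⊆ (2 * m + 1).primesBelow := by
    intro p hp
    have hpp : p.Prime := Nat.prime_of_mem_primeFactors (by simpa [Nat.support_factorization] using hp)
    have hν : (Nat.centralBinom m).factorization p ≠ 0 := by
      simpa using (Finsupp.mem_support_iff.mp hp)
    have hle : p ^ (Nat.centralBinom m).factorization p ≤ 2 * m := by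
      simpa [Nat.centralBinom] using Nat.pow_factorization_choose_le (p := p) (n := 2 * m) (k := m) h2m
    have : p ≤ 2 * m := le_trans (Nat.le_self_pow hν p) hle
    simp [Nat.primesBelow, Finset.mem_filter, Finset.mem_range]
    exact ⟨by omega, hpp⟩
  have hcard : (Nat.centralBinom m).factorization.support.card ≤ Nat.primeCounting (2 * m) := by
    rw [Nat.primeCounting, ← Nat.primesBelow_card_eq_primeCounting']
    exact Finset.card_le_card hsub
  have h2 : Nat.centralBinom m ≤ (2 * m) ^ Nat.primeCounting (2 * m) := by
    calc Nat.centralBinom m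
        = (Nat.centralBinom m).factorization.prod (· ^ ·) :=
          (Nat.factorization_prod_pow_eq_self hN).symm
      _ ≤ (2 * m) ^ (Nat.centralBinom m).factorization.support.card := by
          apply Finset.prod_le_pow_card
          intro p hp
          simpa [Nat.centralBinom] using
            Nat.pow_factorization_choose_le (p := p) (n := 2 * m) (k := m) h2m
      _ ≤ (2 * m) ^ Nat.primeCounting (2 * m) := Nat.pow_le_pow_right h2m hcard
  calc 4 ^ m ≤ 2 * m * Nat.centralBinom m :=
        Nat.four_pow_le_two_mul_self_mul_centralBinom m hm
    _ ≤ 2 * m * (2 * m) ^ Nat.primeCounting (2 * m) := Nat.mul_le_mul_left _ h2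
    _ = (2 * m) ^ (Nat.primeCounting (2 * m) + 1) := by ring

lemma abbott_crt {ι : Type*} [DecidableEq ι] (s : Finset ι) (p : ι → ℕ)
    (hp : ∀ i ∈ s, (p i).Prime) (hinj : Set.InjOn p s) (a : ι → ℤ) :
    ∃ z : ℤ, ∀ i ∈ s, (p i : ℤ) ∣ z - a i := by
  induction s using Finset.induction_on with
  | empty => exact ⟨0, by simp⟩
  | @insert j s hj IH =>
    obtain ⟨z, hz⟩ := IH (fun i hi => hp i (Finset.mem_insert_of_mem hi))
      (hinj.mono (by simp [Finset.subset_insert, Finset.coe_subset]))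
    have hpj : (p j).Prime := hp j (Finset.mem_insert_self j s)
    have hcop : Nat.Coprime (p j) (∏ i ∈ s, p i) := by
      apply Nat.Coprime.prod_right
      intro i hi
      have hne : p j ≠ p i := fun h => hj (by
        have : j = i := hinj (Finset.mem_insert_self j s)
          (Finset.mem_insert_of_mem hi) h
        exact this ▸ hi)
      exact (Nat.coprime_primes hpj (hp i (Finset.mem_insert_of_mem hi))).mpr hne
    have hic : IsCoprime ((p j : ℤ)) ((∏ i ∈ s, p i : ℕ) : ℤ) :=
      Nat.isCoprime_iff_coprime.mpr hcop
    obtain ⟨u, v, huv⟩ := hic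
    set M : ℤ := ((∏ i ∈ s, p i : ℕ) : ℤ) with hM
    refine ⟨z + (a j - z) * (v * M), ?_⟩
    intro i hi
    rcases Finset.mem_insert.mp hi with rfl | hi
    · refine ⟨(a i - z) * (-u), ?_⟩
      have : v * M = 1 - u * (p i : ℤ) := by linarith
      rw [this]; ring
    · have h1 : (p i : ℤ) ∣ z - a i := hz i hi
      have h2 : (p i : ℤ) ∣ M := by
        rw [hM]
        exact_mod_cast Int.natCast_dvd_natCast.mpr (Finset.dvd_prod_of_mem p hi)
      have : z + (a j - z) * (v * M) - a i = (z - a i) + ((a j - z) * v) * M := by ring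
      rw [this]
      exact dvd_add h1 (Dvd.dvd.mul_left h2 _)

lemma abbott_primes (r x : ℕ) (hr : r ≤ Nat.primeCounting x) :
    ∃ p : Fin r → ℕ, (∀ i, (p i).Prime) ∧ Function.Injective p ∧ (∏ i, p i) ≤ 4 ^ x := by
  have hcard : r ≤ (x + 1).primesBelow.card := by
    rwa [Nat.primesBelow_card_eq_primeCounting']
  obtain ⟨t, hts, htc⟩ := Finset.exists_subset_card_eq hcard
  have e := t.orderIsoOfFin htc
  refine ⟨fun i => (e i : ℕ), ?_, ?_, ?_⟩
  · intro i
    exact Nat.prime_of_mem_primesBelow (hts (e i).2)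
  · intro i j hij
    exact e.injective (Subtype.ext hij)
  · have h1 : (∏ i, ((e i : ℕ))) = ∏ a ∈ t, a := by
      rw [← Finset.prod_coe_sort t (fun a => (a : ℕ))]
      exact Fintype.prod_equiv e.toEquiv _ _ (fun i => rfl)
    rw [h1]
    calc ∏ a ∈ t, a ≤ ∏ a ∈ (x + 1).primesBelow, a := by
          apply Finset.prod_le_prod_of_subset_of_one_le' hts
          intro a ha _
          exact (Nat.prime_of_mem_primesBelow ha).one_lt.le
      _ = primorial x := by rfl
      _ ≤ 4 ^ x := primorial_le_4_pow x

lemma abbott_analytic : ∃ N : ℕ, ∀ n : ℕ, N < n →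
    ∃ x : ℕ, (⌊Real.log n / (2 * Real.log (Real.log n))⌋₊ + 1) ≤ Nat.primeCounting x ∧
      (⌊Real.log n / (2 * Real.log (Real.log n))⌋₊ + 2) * 4 ^ x ≤ n := by
  refine ⟨⌈Real.exp (Real.exp 18)⌉₊, fun n hn => ?_⟩
  -- basic facts
  have hnR : (Real.exp (Real.exp 18)) < (n : ℝ) := by
    calc Real.exp (Real.exp 18) ≤ (⌈Real.exp (Real.exp 18)⌉₊ : ℝ) := Nat.le_ceil _
      _ < n := by exact_mod_cast hn
  have hnpos : (0:ℝ) < n := lt_trans (Real.exp_pos _) hnR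
  set ℓ := Real.log n with hℓdef
  have hl : Real.exp 18 < ℓ := by
    have := Real.log_lt_log (Real.exp_pos _) hnR
    rwa [Real.log_exp] at this
  have hlpos : (0:ℝ) < ℓ := lt_trans (Real.exp_pos _) hl
  set t := Real.log ℓ with htdef
  have ht : (18:ℝ) < t := by
    have := Real.log_lt_log (Real.exp_pos _) hl
    rwa [Real.log_exp] at this
  have htpos : (0:ℝ) < t := by linarith
  -- numeric: exp 18 ≥ 40960000 and ℓ big
  have hexp1 : (2.7182818283 : ℝ) < Real.exp 1 := Real.exp_one_gt_d9
  have hexp18 : (40960000 : ℝ) ≤ Real.exp 18 := by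
    have h1 : ((2.7182818283 : ℝ)) ^ (18:ℕ) ≤ (Real.exp 1) ^ (18:ℕ) :=
      pow_le_pow_left₀ (by norm_num) hexp1.le 18
    have h2 : (Real.exp 1) ^ (18:ℕ) = Real.exp 18 := by
      rw [← Real.exp_nat_mul]; norm_num
    nlinarith [h1, h2]
  have hlbig : (40960000:ℝ) ≤ ℓ := le_trans hexp18 hl.le
  -- F1 : 400 t^2 ≤ ℓ
  have hF1 : 400 * t^2 ≤ ℓ := by
    have h4 : t ≤ 4 * ℓ ^ ((4:ℝ)⁻¹) := by
      have := Real.log_le_rpow_div hlpos.le (by norm_num : (0:ℝ) < (4:ℝ)⁻¹)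
      calc t ≤ ℓ ^ ((4:ℝ)⁻¹) / (4:ℝ)⁻¹ := this
        _ = 4 * ℓ ^ ((4:ℝ)⁻¹) := by ring
    have hq : ℓ ^ ((4:ℝ)⁻¹) * ℓ ^ ((4:ℝ)⁻¹) = ℓ ^ ((2:ℝ)⁻¹) := by
      rw [← Real.rpow_add hlpos]; norm_num
    have hs : ℓ ^ ((2:ℝ)⁻¹) * ℓ ^ ((2:ℝ)⁻¹) = ℓ := by
      rw [← Real.rpow_add hlpos]; norm_num
    have hspos : (0:ℝ) ≤ ℓ ^ ((2:ℝ)⁻¹) := (Real.rpow_pos_of_pos hlpos _).le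
    have hs6400 : (6400:ℝ) ≤ ℓ ^ ((2:ℝ)⁻¹) := by
      by_contra hcon
      push_neg at hcon
      nlinarith [hs, hlbig]
    have ht2 : t^2 ≤ 16 * ℓ ^ ((2:ℝ)⁻¹) := by
      have h0 : (0:ℝ) ≤ ℓ ^ ((4:ℝ)⁻¹) := (Real.rpow_pos_of_pos hlpos _).le
      nlinarith [h4, hq, htpos]
    nlinarith [ht2, hs6400, hs, hspos]
  -- set up β, m, x
  have hlog2u : Real.log 2 < 0.6931471808 := Real.log_two_lt_d9
  have hlog2l : (0.6931471803:ℝ) < Real.log 2 := Real.log_two_gt_d9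
  set β : ℝ := (1/2 - 1/(40*t)) * ℓ / Real.log 2 with hβdef
  have hηb : (0.49:ℝ) ≤ 1/2 - 1/(40*t) := by
    have : 1/(40*t) ≤ 1/720 := by
      apply div_le_div_of_nonneg_left (by norm_num) (by norm_num) (by linarith)
    linarith
  have hβbig : 1000000 ≤ β := by
    have h1 : (0.49:ℝ) * ℓ ≤ (1/2 - 1/(40*t)) * ℓ := by nlinarith
    have h2 : (1/2 - 1/(40*t)) * ℓ ≤ β := by
      rw [hβdef]
      rw [le_div_iff₀ (by linarith : (0:ℝ) < Real.log 2)]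
      nlinarith
    linarith
  set m : ℕ := ⌊β/2⌋₊ with hmdef
  have hm1 : 1 ≤ m := by
    apply Nat.le_floor
    push_cast; linarith
  set x : ℕ := 2 * m with hxdef
  have hxβ : (x:ℝ) ≤ β := by
    have := Nat.floor_le (by linarith : (0:ℝ) ≤ β/2)
    push_cast [hxdef]; linarith
  have hxβ2 : β - 2 ≤ (x:ℝ) := by
    have := Nat.sub_one_lt_floor (β/2)
    push_cast [hxdef]; linarith
  have hx2 : (2:ℕ) ≤ x := by omega
  have hxpos : (0:ℝ) < x := by exact_mod_cast Nat.lt_of_lt_of_le (by norm_num) hx2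
  -- log x ≤ t - 1/10
  have hlog2log2 : (1:ℝ)/10 ≤ Real.log (2 * Real.log 2) := by
    have hexp110 : Real.exp (1/10) ≤ 2 * Real.log 2 := by
      by_contra hcon
      push_neg at hcon
      have h10 : (Real.exp (1/10)) ^ (10:ℕ) = Real.exp 1 := by
        rw [← Real.exp_nat_mul]; norm_num
      have hb : (0:ℝ) ≤ 2 * Real.log 2 := by linarith
      have := pow_le_pow_left₀ hb hcon.le 10
      rw [h10] at this
      have hexp1u : Real.exp 1 < 2.7182818286 := Real.exp_one_lt_d9
      have hkey : (2.7182818286:ℝ) < (1.3862943606:ℝ)^(10:ℕ) := by norm_num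
      have hmono : (1.3862943606:ℝ)^(10:ℕ) ≤ (2*Real.log 2)^(10:ℕ) :=
        pow_le_pow_left₀ (by norm_num) (by linarith) 10
      linarith
    calc (1:ℝ)/10 = Real.log (Real.exp (1/10)) := by rw [Real.log_exp]
      _ ≤ Real.log (2 * Real.log 2) := Real.log_le_log (Real.exp_pos _) hexp110
  have hlogx : Real.log x ≤ t - 1/10 := by
    have hβle : β ≤ ℓ / (2 * Real.log 2) := by
      rw [hβdef, div_le_div_iff₀ (by linarith) (by linarith)]
      have h0 : (0:ℝ) ≤ 1/(40*t) * ℓ * (2*Real.log 2) := by positivity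
      nlinarith [h0]
    have h1 : Real.log x ≤ Real.log (ℓ / (2 * Real.log 2)) :=
      Real.log_le_log hxpos (le_trans hxβ hβle)
    have h2 : Real.log (ℓ / (2 * Real.log 2)) = t - Real.log (2 * Real.log 2) := by
      rw [Real.log_div (by linarith) (by linarith)]
    linarith
  set L : ℝ := ℓ / (2 * t) with hLdef
  have hLpos : 0 ≤ L := by positivity
  set R : ℕ := ⌊L⌋₊ with hRdef
  have hRL : (R:ℝ) ≤ L := Nat.floor_le hLpos
  refine ⟨x, ?_, ?_⟩
  · -- prime counting bound
    have hcheb := abbott_cheby m hm1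
    rw [← hxdef] at hcheb
    have hlogle : (m:ℝ) * Real.log 4 ≤ (Nat.primeCounting x + 1 : ℕ) * Real.log x := by
      have h1 : Real.log ((4:ℕ)^m : ℕ) ≤ Real.log ((x:ℕ) ^ (Nat.primeCounting x + 1) : ℕ) := by
        apply Real.log_le_log (by positivity)
        exact_mod_cast hcheb
      rw [Nat.cast_pow, Nat.cast_pow, Real.log_pow, Real.log_pow] at h1
      exact_mod_cast h1
    have hlog4 : Real.log 4 = 2 * Real.log 2 := by
      rw [show (4:ℝ) = 2^2 by norm_num, Real.log_pow]; push_cast; ring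
    have hm4 : (m:ℝ) * Real.log 4 = (x:ℝ) * Real.log 2 := by
      rw [hlog4]; push_cast [hxdef]; ring
    -- key inequality: (L+2) * log x ≤ x * log 2
    have hkey : (L + 2) * Real.log x ≤ (x:ℝ) * Real.log 2 := by
      have hlhs : (L + 2) * Real.log x ≤ (L + 2) * (t - 1/10) := by
        apply mul_le_mul_of_nonneg_left hlogx (by linarith)
      have hrhs : (β - 2) * Real.log 2 ≤ (x:ℝ) * Real.log 2 := by
        apply mul_le_mul_of_nonneg_right hxβ2 (by linarith)
      have hβl2 : (β - 2) * Real.log 2 = (1/2 - 1/(40*t)) * ℓ - 2 * Real.log 2 := by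
        rw [hβdef]; field_simp
      have hmain : (L + 2) * (t - 1/10) ≤ (1/2 - 1/(40*t)) * ℓ - 2 * Real.log 2 := by
        rw [hLdef]
        have hexp : (ℓ/(2*t) + 2) * (t - 1/10) = ℓ/2 - ℓ/(20*t) + 2*t - 1/5 := by
          field_simp; ring
        have hexp2 : (1/2 - 1/(40*t)) * ℓ = ℓ/2 - ℓ/(40*t) := by
          field_simp
        rw [hexp, hexp2]
        -- need : 2t + 2 log 2 - 1/5 ≤ ℓ/(20t) - ℓ/(40t) = ℓ/(40t)
        have h40 : ℓ/(20*t) - ℓ/(40*t) = ℓ/(40*t) := by field_simp; ring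
        have hneed : 2*t + 2*Real.log 2 - 1/5 ≤ ℓ/(40*t) := by
          rw [le_div_iff₀ (by linarith : (0:ℝ) < 40*t)]
          nlinarith [hF1, ht, hlog2u]
        linarith
      linarith
    have hlogxpos : (0:ℝ) < Real.log x := by
      have : Real.log 2 ≤ Real.log x := Real.log_le_log (by norm_num) (by exact_mod_cast hx2)
      linarith
    have hfin : L + 2 ≤ ((Nat.primeCounting x + 1 : ℕ) : ℝ) := by
      by_contra hcon
      push_neg at hcon
      have := mul_lt_mul_of_pos_right hcon hlogxpos
      nlinarith [hlogle, hm4]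
    have : (R:ℝ) + 1 ≤ (Nat.primeCounting x : ℝ) := by
      push_cast at hfin ⊢
      linarith
    exact_mod_cast this
  · -- size bound
    have hR2 : ((R:ℝ) + 2) ≤ ℓ := by
      have : L + 2 ≤ ℓ := by
        rw [hLdef]
        rw [div_add' _ _ _ (by linarith : (2*t) ≠ 0)]
        rw [div_le_iff₀ (by linarith : (0:ℝ) < 2*t)]
        nlinarith [hF1, ht]
      linarith
    have hlogR : Real.log ((R:ℝ) + 2) ≤ t := by
      calc Real.log ((R:ℝ)+2) ≤ Real.log ℓ := Real.log_le_log (by positivity) hR2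
        _ = t := rfl
    have hxlog4 : (x:ℝ) * Real.log 4 ≤ (1 - 1/(20*t)) * ℓ := by
      have hlog4 : Real.log 4 = 2 * Real.log 2 := by
        rw [show (4:ℝ) = 2^2 by norm_num, Real.log_pow]; push_cast; ring
      have : (x:ℝ) * Real.log 4 ≤ β * (2 * Real.log 2) := by
        rw [← hlog4]
        apply mul_le_mul_of_nonneg_right hxβ (by rw [hlog4]; linarith)
      have hβeq : β * (2 * Real.log 2) = (1 - 1/(20*t)) * ℓ := by
        rw [hβdef]; field_simp; ring
      linarith
    have hsum : Real.log ((R:ℝ) + 2) + (x:ℝ) * Real.log 4 ≤ ℓ := by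
      have : t ≤ ℓ/(20*t) := by
        rw [le_div_iff₀ (by linarith : (0:ℝ) < 20*t)]
        nlinarith [hF1]
      have h2 : (1 - 1/(20*t)) * ℓ = ℓ - ℓ/(20*t) := by field_simp
      linarith [hxlog4, hlogR]
    have hfinal : ((R:ℝ) + 2) * 4^x ≤ (n:ℝ) := by
      have hpos : (0:ℝ) < ((R:ℝ) + 2) * 4^x := by positivity
      have hlogeq : Real.log (((R:ℝ) + 2) * 4^x) = Real.log ((R:ℝ)+2) + (x:ℝ) * Real.log 4 := by
        rw [Real.log_mul (by positivity) (by positivity), Real.log_pow]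
      have : Real.log (((R:ℝ) + 2) * 4^x) ≤ Real.log n := by
        rw [hlogeq]; exact le_trans hsum (le_refl _)
      calc ((R:ℝ) + 2) * 4^x = Real.exp (Real.log (((R:ℝ) + 2) * 4^x)) := (Real.exp_log hpos).symm
        _ ≤ Real.exp (Real.log n) := Real.exp_le_exp.mpr this
        _ = n := Real.exp_log hnpos
    have : ((R + 2) * 4^x : ℕ) ≤ ((n:ℕ)) := by
      have hc : (((R + 2) * 4^x : ℕ) : ℝ) ≤ (n:ℝ) := by push_cast; linarith [hfinal]
      exact_mod_cast hc
    exact this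

/-- Lower bound in Abbott's theorem. -/
theorem abbott_lower_bound :
    ∃ N : ℕ, ∀ n : ℕ, N < n →
      (∀ P : Fin (⌊Real.log n / (2 * Real.log (Real.log n))⌋₊ + 1) → ℤ × ℤ,
          (∀ i, 0 ≤ (P i).1 ∧ (P i).1 ≤ n ∧ 0 ≤ (P i).2 ∧ (P i).2 ≤ n) →
          ∃ q : ℤ × ℤ, (0 ≤ q.1 ∧ q.1 ≤ n ∧ 0 ≤ q.2 ∧ q.2 ≤ n) ∧
            (∀ i, q ≠ P i) ∧
            ∀ i, Int.gcd (q.1 - (P i).1) (q.2 - (P i).2) ≠ 1) ∧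
      ∀ B : Finset (ℤ × ℤ),
        (∀ p ∈ B, 0 ≤ p.1 ∧ p.1 ≤ n ∧ 0 ≤ p.2 ∧ p.2 ≤ n) →
        (∀ q : ℤ × ℤ, 0 ≤ q.1 → q.1 ≤ n → 0 ≤ q.2 → q.2 ≤ n →
          ∃ p ∈ B, q ≠ p ∧ Int.gcd (q.1 - p.1) (q.2 - p.2) = 1) →
        Real.log n / (2 * Real.log (Real.log n)) < (B.card : ℝ) := by
  obtain ⟨N₀, hN₀⟩ := abbott_analytic
  refine ⟨N₀, fun n hn => ?_⟩
  set R : ℕ := ⌊Real.log n / (2 * Real.log (Real.log n))⌋₊ with hRdef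
  obtain ⟨x, hπ, hsize⟩ := hN₀ n hn
  have part1 : ∀ P : Fin (R + 1) → ℤ × ℤ,
      ∃ q : ℤ × ℤ, (0 ≤ q.1 ∧ q.1 ≤ n ∧ 0 ≤ q.2 ∧ q.2 ≤ n) ∧
        (∀ i, q ≠ P i) ∧
        ∀ i, Int.gcd (q.1 - (P i).1) (q.2 - (P i).2) ≠ 1 := by
    intro P
    obtain ⟨p, hpprime, hpinj, hprod⟩ := abbott_primes (R + 1) x hπ
    set M : ℕ := ∏ i, p i with hMdef
    have hMpos : 0 < M := Finset.prod_pos (fun i _ => (hpprime i).pos)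
    have hMn : (R + 2) * M ≤ n := le_trans (Nat.mul_le_mul_left _ hprod) hsize
    obtain ⟨z1, hz1⟩ := abbott_crt Finset.univ p (fun i _ => hpprime i)
      (hpinj.injOn) (fun i => (P i).1)
    obtain ⟨z2, hz2⟩ := abbott_crt Finset.univ p (fun i _ => hpprime i)
      (hpinj.injOn) (fun i => (P i).2)
    set x₀ : ℤ := z1 % (M : ℤ) with hx₀def
    set y₀ : ℤ := z2 % (M : ℤ) with hy₀def
    have hMne : (M : ℤ) ≠ 0 := by exact_mod_cast hMpos.ne'
    have hMposZ : (0:ℤ) < M := by exact_mod_cast hMpos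
    have hx₀0 : 0 ≤ x₀ := Int.emod_nonneg z1 hMne
    have hx₀M : x₀ < M := Int.emod_lt_of_pos z1 hMposZ
    have hy₀0 : 0 ≤ y₀ := Int.emod_nonneg z2 hMne
    have hy₀M : y₀ < M := Int.emod_lt_of_pos z2 hMposZ
    have hpM : ∀ i, (p i : ℤ) ∣ (M : ℤ) := fun i => by
      exact_mod_cast Int.natCast_dvd_natCast.mpr (Finset.dvd_prod_of_mem p (Finset.mem_univ i))
    have hdM1 : (M : ℤ) ∣ z1 - x₀ := ⟨z1 / M, by rw [hx₀def, Int.emod_def]; ring⟩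
    have hdM2 : (M : ℤ) ∣ z2 - y₀ := ⟨z2 / M, by rw [hy₀def, Int.emod_def]; ring⟩
    have hdvd1 : ∀ i, (p i : ℤ) ∣ x₀ - (P i).1 := by
      intro i
      have h1 : (p i : ℤ) ∣ z1 - (P i).1 := hz1 i (Finset.mem_univ i)
      have h2 : (p i : ℤ) ∣ z1 - x₀ := dvd_trans (hpM i) hdM1
      have : x₀ - (P i).1 = (z1 - (P i).1) - (z1 - x₀) := by ring
      rw [this]; exact dvd_sub h1 h2
    have hdvd2 : ∀ i, (p i : ℤ) ∣ y₀ - (P i).2 := by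
      intro i
      have h1 : (p i : ℤ) ∣ z2 - (P i).2 := hz2 i (Finset.mem_univ i)
      have h2 : (p i : ℤ) ∣ z2 - y₀ := dvd_trans (hpM i) hdM2
      have : y₀ - (P i).2 = (z2 - (P i).2) - (z2 - y₀) := by ring
      rw [this]; exact dvd_sub h1 h2
    -- pigeonhole: pick j ∈ [0, R+1] with (x₀ + j*M, y₀) avoiding all P i
    have hpick : ∃ j ∈ Finset.range (R + 2), ∀ i, ((x₀ + (j : ℤ) * M, y₀) : ℤ × ℤ) ≠ P i := by
      by_contra hcon
      push_neg at hcon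
      choose f hf using hcon
      have h0mem : (0:ℕ) ∈ Finset.range (R+2) := by simp
      set g : ℕ → Fin (R+1) := fun j => if h : j ∈ Finset.range (R+2) then f j h else f 0 h0mem
        with hgdef
      have hmaps : ∀ j ∈ Finset.range (R+2), g j ∈ (Finset.univ : Finset (Fin (R+1))) :=
        fun _ _ => Finset.mem_univ _
      have hclt : (Finset.univ : Finset (Fin (R+1))).card < (Finset.range (R+2)).card := by simp
      obtain ⟨j, hj, j', hj', hne, heq⟩ :=
        Finset.exists_ne_map_eq_of_card_lt_of_maps_to hclt hmaps
      have e1 : ((x₀ + (j:ℤ) * M, y₀) : ℤ × ℤ) = P (g j) := by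
        rw [hgdef]; dsimp only; rw [dif_pos hj]; exact hf j hj
      have e2 : ((x₀ + (j':ℤ) * M, y₀) : ℤ × ℤ) = P (g j') := by
        rw [hgdef]; dsimp only; rw [dif_pos hj']; exact hf j' hj'
      rw [heq] at e1
      have e3 := e1.trans e2.symm
      have e4 : x₀ + (j:ℤ) * M = x₀ + (j':ℤ) * M := congrArg Prod.fst e3
      have e5 : (j:ℤ) = (j':ℤ) := by
        have : (j:ℤ) * M = (j':ℤ) * M := by linarith
        exact mul_right_cancel₀ hMne this
      exact hne (by exact_mod_cast e5)
    obtain ⟨j, hjmem, hjne⟩ := hpick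
    have hjle : (j : ℤ) ≤ R + 1 := by
      have := Finset.mem_range.mp hjmem
      exact_mod_cast Nat.lt_succ_iff.mp this
    refine ⟨(x₀ + (j : ℤ) * M, y₀), ⟨?_, ?_, ?_, ?_⟩, hjne, ?_⟩
    · have : (0:ℤ) ≤ (j : ℤ) * M := by positivity
      simpa using add_nonneg hx₀0 this
    · show x₀ + (j : ℤ) * M ≤ (n : ℤ)
      have hMnZ : ((R : ℤ) + 2) * M ≤ n := by exact_mod_cast hMn
      nlinarith [hx₀M, hjle, hMposZ]
    · exact hy₀0
    · show y₀ ≤ (n : ℤ)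
      have hMnZ : ((R : ℤ) + 2) * M ≤ n := by exact_mod_cast hMn
      nlinarith [hy₀M, hMposZ]
    · intro i hgcd
      have hd1 : (p i : ℤ) ∣ (x₀ + (j : ℤ) * M) - (P i).1 := by
        have : (x₀ + (j : ℤ) * M) - (P i).1 = (x₀ - (P i).1) + (j : ℤ) * M := by ring
        rw [this]
        exact dvd_add (hdvd1 i) (Dvd.dvd.mul_left (hpM i) _)
      have hd := Int.dvd_gcd hd1 (hdvd2 i)
      rw [hgcd] at hd
      have := Nat.le_of_dvd (by norm_num) hd
      have h2 := (hpprime i).two_le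
      omega
  constructor
  · intro P _
    exact part1 P
  · intro B hB hvis
    by_contra hcon
    push_neg at hcon
    have hcard : B.card ≤ R := Nat.le_floor hcon
    obtain ⟨p₀, hp₀, -, -⟩ := hvis (0, 0) le_rfl (show (0:ℤ) ≤ (n:ℤ) from Int.natCast_nonneg n)
      le_rfl (show (0:ℤ) ≤ (n:ℤ) from Int.natCast_nonneg n)
    set P : Fin (R + 1) → ℤ × ℤ := fun i =>
      if h : (i : ℕ) < B.card then ((B.equivFin.symm ⟨i, h⟩ : B) : ℤ × ℤ) else p₀ with hPdef
    obtain ⟨q, hqbox, hqne, hqgcd⟩ := part1 P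
    obtain ⟨b, hbB, hqb, hgcd1⟩ := hvis q hqbox.1 hqbox.2.1 hqbox.2.2.1 hqbox.2.2.2
    set k : Fin B.card := B.equivFin ⟨b, hbB⟩ with hkdef
    have hk : (k : ℕ) < R + 1 := lt_of_lt_of_le k.2 (le_trans hcard (Nat.le_succ R))
    have hPk : P ⟨(k : ℕ), hk⟩ = b := by
      rw [hPdef]
      dsimp only
      rw [dif_pos k.2]
      have : (⟨(k : ℕ), k.2⟩ : Fin B.card) = k := rfl
      rw [this, hkdef, Equiv.symm_apply_apply]
    exact hqgcd ⟨(k : ℕ), hk⟩ (by rw [hPk]; exact hgcd1)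
end

section
/- For every constant c with 0 < c < 6/π², for all sufficiently large n there exists a lattice point P in the n×n grid A_n such that the number of points of A_n visible from P is at least c·n². -/
open Finset ArithmeticFunction Real Filter
open scoped ArithmeticFunction.Moebius

lemma summable_moebius_div_sq : Summable (fun d : ℕ => (μ d : ℝ) / d ^ 2) := by
  have h2 : Summable (fun d : ℕ => 1 / (d : ℝ) ^ 2) :=
    Real.summable_one_div_nat_pow.mpr one_lt_two
  refine Summable.of_norm (h2.of_nonneg_of_le (fun d => norm_nonneg _) fun d => ?_)
  have hm : |(μ d : ℝ)| ≤ 1 := by exact_mod_cast ArithmeticFunction.abs_moebius_le_one (n := d)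
  rw [Real.norm_eq_abs, abs_div, abs_pow, Nat.abs_cast]
  rcases eq_or_ne d 0 with rfl | hd
  · simp
  · apply div_le_div_of_nonneg_right hm (by positivity) |>.trans_eq rfl

lemma hasSum_moebius_div_sq : HasSum (fun d : ℕ => (μ d : ℝ) / d ^ 2) (6 / π ^ 2) := by
  have hsummable := summable_moebius_div_sq
  have key : (↑(∑' d : ℕ, (μ d : ℝ) / d ^ 2) : ℂ) = ↑(6 / π ^ 2 : ℝ) := by
    rw [Complex.ofReal_tsum]
    have hre : 1 < (2 : ℂ).re := by norm_num
    have hz : riemannZeta 2 * LSeries (fun n => (μ n : ℂ)) 2 = 1 := by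
      have := ArithmeticFunction.LSeries_zeta_mul_Lseries_moebius hre
      rwa [ArithmeticFunction.LSeries_zeta_eq_riemannZeta hre] at this
    have hzval : riemannZeta 2 = (π : ℂ) ^ 2 / 6 := riemannZeta_two
    have hpi : (π : ℂ) ^ 2 ≠ 0 := by
      simp [Real.pi_ne_zero]
    have hL : LSeries (fun n => (μ n : ℂ)) 2 = ((6 / π ^ 2 : ℝ) : ℂ) := by
      rw [hzval] at hz
      push_cast
      field_simp at hz ⊢
      linear_combination hz
    rw [← hL, LSeries]
    refine tsum_congr fun d => ?_
    rcases eq_or_ne d 0 with rfl | hd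
    · simp [LSeries.term_zero]
    · rw [LSeries.term_of_ne_zero hd]
      push_cast
      rw [Complex.cpow_ofNat]
  have := Complex.ofReal_injective key
  exact this ▸ hsummable.hasSum

lemma moebius_sum_divisors (g : ℕ) :
    ∑ d ∈ g.divisors, μ d = if g = 1 then 1 else 0 := by
  have := congrArg (fun f : ArithmeticFunction ℤ => f g)
    (ArithmeticFunction.coe_zeta_mul_coe_moebius (R := ℤ))
  simp only [ArithmeticFunction.coe_zeta_mul_apply, ArithmeticFunction.one_apply,
    ArithmeticFunction.intCoe_apply] at this
  exact this

lemma count_coprime_eq (n : ℕ) :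
    ((((Icc 1 n) ×ˢ (Icc 1 n)).filter fun p : ℕ × ℕ => Nat.gcd p.1 p.2 = 1).card : ℤ)
      = ∑ d ∈ Icc 1 n, μ d * ((n / d : ℕ) : ℤ) ^ 2 := by
  rw [Finset.card_filter]
  push_cast
  have hstep : ∀ p ∈ (Icc 1 n) ×ˢ (Icc 1 n),
      (if Nat.gcd p.1 p.2 = 1 then (1 : ℤ) else 0)
        = ∑ d ∈ Icc 1 n, (if d ∣ p.1 ∧ d ∣ p.2 then μ d else 0) := by
    intro p hp
    rw [Finset.mem_product, Finset.mem_Icc, Finset.mem_Icc] at hp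
    have hg : Nat.gcd p.1 p.2 ≠ 0 := fun h => by
      have := Nat.gcd_eq_zero_iff.mp h
      omega
    rw [Finset.sum_ite, Finset.sum_const_zero, add_zero]
    have hfil : (Icc 1 n).filter (fun d => d ∣ p.1 ∧ d ∣ p.2) = (Nat.gcd p.1 p.2).divisors := by
      ext d
      simp only [Finset.mem_filter, Finset.mem_Icc, Nat.mem_divisors, Nat.dvd_gcd_iff]
      constructor
      · rintro ⟨_, hd⟩; exact ⟨hd, hg⟩
      · rintro ⟨⟨ha, hb⟩, _⟩
        have hd0 : 0 < d := Nat.pos_of_dvd_of_pos ha (by omega)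
        exact ⟨⟨hd0, le_trans (Nat.le_of_dvd (by omega) ha) hp.1.2⟩, ha, hb⟩
    rw [hfil, moebius_sum_divisors]
  rw [Finset.sum_congr rfl hstep, Finset.sum_comm]
  refine Finset.sum_congr rfl fun d _ => ?_
  rw [Finset.sum_ite, Finset.sum_const_zero, add_zero, Finset.sum_const]
  have hprod : ((Icc 1 n) ×ˢ (Icc 1 n)).filter (fun x : ℕ × ℕ => d ∣ x.1 ∧ d ∣ x.2)
      = ((Icc 1 n).filter (fun a => d ∣ a)) ×ˢ ((Icc 1 n).filter (fun a => d ∣ a)) :=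
    Finset.filter_product _ _
  have hcard : ((Icc 1 n).filter (fun a => d ∣ a)).card = n / d := by
    rw [show Icc 1 n = Ioc 0 n from Finset.Icc_add_one_left_eq_Ioc 0 n]
    exact Nat.Ioc_filter_dvd_card_eq_div n d
  rw [hprod, Finset.card_product, hcard, nsmul_eq_mul]
  push_cast
  ring

lemma nat_count_le_int_count (n : ℕ) :
    ((((Icc 1 n) ×ˢ (Icc 1 n)).filter fun p : ℕ × ℕ => Nat.gcd p.1 p.2 = 1).card : ℕ)
      ≤ (((Finset.Icc (0 : ℤ) n ×ˢ Finset.Icc (0 : ℤ) n).filter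
            (fun q : ℤ × ℤ => q ≠ ((0:ℤ), (0:ℤ)) ∧
              Int.gcd (q.1 - (0:ℤ)) (q.2 - (0:ℤ)) = 1)).card) := by
  apply Finset.card_le_card_of_injOn (fun p => ((p.1 : ℤ), (p.2 : ℤ)))
  · intro p hp
    simp only [Finset.mem_coe, Finset.mem_filter, Finset.mem_product, Finset.mem_Icc] at hp ⊢
    obtain ⟨⟨⟨h11, h12⟩, h21, h22⟩, hgcd⟩ := hp
    refine ⟨⟨⟨by positivity, by exact_mod_cast h12⟩, by positivity, by exact_mod_cast h22⟩, ?_, ?_⟩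
    · intro h
      rw [Prod.ext_iff] at h
      have : (p.1 : ℤ) = 0 := h.1
      have : p.1 = 0 := by exact_mod_cast this
      omega
    · rw [sub_zero, sub_zero, Int.gcd_natCast_natCast]
      exact hgcd
  · intro p _ q _ h
    simp only [Prod.mk.injEq, Nat.cast_inj] at h
    exact Prod.ext h.1 h.2

lemma sum_lower_bound (n : ℕ) (hn : 1 ≤ n) :
    (n : ℝ) ^ 2 * (∑ d ∈ Icc 1 n, (μ d : ℝ) / d ^ 2) - 2 * n * (1 + Real.log n)
      ≤ ∑ d ∈ Icc 1 n, (μ d : ℝ) * ((n / d : ℕ) : ℝ) ^ 2 := by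
  have hterm : ∀ d ∈ Icc 1 n,
      (μ d : ℝ) * (n : ℝ) ^ 2 / d ^ 2 - 2 * n * (d : ℝ)⁻¹
        ≤ (μ d : ℝ) * ((n / d : ℕ) : ℝ) ^ 2 := by
    intro d hd
    rw [Finset.mem_Icc] at hd
    have hd1 : (1 : ℝ) ≤ d := by exact_mod_cast hd.1
    have hd0 : (0 : ℝ) < d := by linarith
    have hf0 : (0 : ℝ) ≤ ((n / d : ℕ) : ℝ) := Nat.cast_nonneg _
    have hfle : ((n / d : ℕ) : ℝ) ≤ (n : ℝ) / d := Nat.cast_div_le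
    have hxlt : (n : ℝ) / d < ((n / d : ℕ) : ℝ) + 1 := by
      rw [div_lt_iff₀ hd0]
      have h := Nat.div_add_mod n d
      have h2 : n % d < d := Nat.mod_lt n (by omega)
      have : (n : ℝ) < d * (n / d : ℕ) + d := by exact_mod_cast by push_cast; omega
      linarith [this]
    have hmu : |(μ d : ℝ)| ≤ 1 := by
      exact_mod_cast ArithmeticFunction.abs_moebius_le_one (n := d)
    have habs := abs_le.mp hmu
    have key : (μ d : ℝ) * ((n:ℝ)/d)^2 - 2*((n:ℝ)/d) ≤ (μ d : ℝ) * ((n / d : ℕ) : ℝ)^2 := by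
      nlinarith [mul_le_mul_of_nonneg_right habs.2
        (by nlinarith : (0:ℝ) ≤ ((n:ℝ)/d)^2 - ((n / d : ℕ) : ℝ)^2)]
    have e : (μ d : ℝ) * (n : ℝ) ^ 2 / d ^ 2 - 2 * n * (d : ℝ)⁻¹
        = (μ d : ℝ) * ((n:ℝ)/d)^2 - 2*((n:ℝ)/d) := by
      field_simp
    rw [e]
    exact key
  calc (n : ℝ) ^ 2 * (∑ d ∈ Icc 1 n, (μ d : ℝ) / d ^ 2) - 2 * n * (1 + Real.log n)
      ≤ (n : ℝ) ^ 2 * (∑ d ∈ Icc 1 n, (μ d : ℝ) / d ^ 2)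
          - 2 * n * (∑ d ∈ Icc 1 n, (d : ℝ)⁻¹) := by
        have hharm : (∑ d ∈ Icc 1 n, (d : ℝ)⁻¹) ≤ 1 + Real.log n := by
          have h1 := harmonic_le_one_add_log n
          rw [harmonic_eq_sum_Icc] at h1
          push_cast at h1
          exact h1
        have hn0 : (0:ℝ) ≤ 2 * n := by positivity
        nlinarith [mul_le_mul_of_nonneg_left hharm hn0]
    _ = ∑ d ∈ Icc 1 n, ((μ d : ℝ) * (n : ℝ) ^ 2 / d ^ 2 - 2 * n * (d : ℝ)⁻¹) := by
        rw [Finset.sum_sub_distrib, Finset.mul_sum, Finset.mul_sum]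
        congr 1
        · exact Finset.sum_congr rfl fun d _ => by ring
    _ ≤ _ := Finset.sum_le_sum hterm

lemma tendsto_partial_sums :
    Tendsto (fun n : ℕ => ∑ d ∈ Icc 1 n, (μ d : ℝ) / d ^ 2) atTop (nhds (6 / π ^ 2)) := by
  have h := hasSum_moebius_div_sq.tendsto_sum_nat
  have heq : ∀ n : ℕ, ∑ d ∈ Icc 1 n, (μ d : ℝ) / d ^ 2
      = ∑ d ∈ Finset.range (n + 1), (μ d : ℝ) / d ^ 2 := by
    intro n
    refine Finset.sum_subset (fun x hx => ?_) (fun x hx hnx => ?_)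
    · rw [Finset.mem_Icc] at hx; rw [Finset.mem_range]; omega
    · rw [Finset.mem_range] at hx; rw [Finset.mem_Icc] at hnx
      have : x = 0 := by omega
      simp [this]
  simp_rw [heq]
  exact h.comp (tendsto_add_atTop_nat 1)

lemma tendsto_error : Tendsto (fun n : ℕ => 2 * (1 + Real.log n) / n) atTop (nhds 0) := by
  have t1 : Tendsto (fun x : ℝ => Real.log x / x) atTop (nhds 0) :=
    Real.isLittleO_log_id_atTop.tendsto_div_nhds_zero
  have t3 : Tendsto (fun x : ℝ => 2 * (x⁻¹ + Real.log x / x)) atTop (nhds (2 * (0 + 0))) :=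
    (tendsto_inv_atTop_zero.add t1).const_mul 2
  norm_num at t3
  have hfe : (fun x : ℝ => 2 * (x⁻¹ + Real.log x / x)) = fun x : ℝ => 2 * (1 + Real.log x) / x := by
    funext x; ring
  rw [hfe] at t3
  exact t3.comp tendsto_natCast_atTop_atTop

theorem exists_point_seeing_many (c : ℝ) (hc0 : 0 < c) (hc : c < 6 / Real.pi ^ 2) :
    ∃ N : ℕ, ∀ n : ℕ, N ≤ n →
      ∃ P ∈ Finset.Icc (0 : ℤ) n ×ˢ Finset.Icc (0 : ℤ) n,
        c * (n : ℝ) ^ 2 ≤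
          (((Finset.Icc (0 : ℤ) n ×ˢ Finset.Icc (0 : ℤ) n).filter
            (fun q : ℤ × ℤ => q ≠ P ∧ Int.gcd (q.1 - P.1) (q.2 - P.2) = 1)).card : ℝ) := by
  set c' : ℝ := (c + 6 / π ^ 2) / 2 with hc'def
  have hcc' : c < c' := by rw [hc'def]; linarith
  have hc'lt : c' < 6 / π ^ 2 := by rw [hc'def]; linarith
  have E1 : ∀ᶠ n : ℕ in atTop, c' < ∑ d ∈ Icc 1 n, (μ d : ℝ) / d ^ 2 :=
    tendsto_partial_sums.eventually (eventually_gt_nhds hc'lt)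
  have E2 : ∀ᶠ n : ℕ in atTop, 2 * (1 + Real.log n) / n < c' - c :=
    tendsto_error.eventually (eventually_lt_nhds (by linarith))
  have E3 : ∀ᶠ n : ℕ in atTop, 1 ≤ n := eventually_ge_atTop 1
  obtain ⟨N, hN⟩ := eventually_atTop.mp ((E1.and E2).and E3)
  refine ⟨N, fun n hn => ?_⟩
  obtain ⟨⟨h1, h2⟩, hn1⟩ := hN n hn
  refine ⟨((0:ℤ), (0:ℤ)), ?_, ?_⟩
  · simp only [Finset.mem_product, Finset.mem_Icc]
    refine ⟨⟨le_refl _, ?_⟩, le_refl _, ?_⟩ <;> exact_mod_cast Nat.zero_le n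
  show c * (n : ℝ) ^ 2 ≤
    (((Finset.Icc (0 : ℤ) n ×ˢ Finset.Icc (0 : ℤ) n).filter
      (fun q : ℤ × ℤ => q ≠ ((0:ℤ), (0:ℤ)) ∧
        Int.gcd (q.1 - (0:ℤ)) (q.2 - (0:ℤ)) = 1)).card : ℝ)
  have hn0 : (0:ℝ) < n := by exact_mod_cast hn1
  have hcast : (((((Icc 1 n) ×ˢ (Icc 1 n)).filter
      fun p : ℕ × ℕ => Nat.gcd p.1 p.2 = 1).card : ℕ) : ℝ)
      = ∑ d ∈ Icc 1 n, (μ d : ℝ) * ((n / d : ℕ) : ℝ) ^ 2 := by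
    have h0 := congrArg (fun z : ℤ => (z : ℝ)) (count_coprime_eq n)
    push_cast at h0
    exact h0
  have hmono : (((((Icc 1 n) ×ˢ (Icc 1 n)).filter
      fun p : ℕ × ℕ => Nat.gcd p.1 p.2 = 1).card : ℕ) : ℝ)
      ≤ (((Finset.Icc (0 : ℤ) n ×ˢ Finset.Icc (0 : ℤ) n).filter
        (fun q : ℤ × ℤ => q ≠ ((0:ℤ), (0:ℤ)) ∧
          Int.gcd (q.1 - (0:ℤ)) (q.2 - (0:ℤ)) = 1)).card : ℝ) := by
    exact_mod_cast nat_count_le_int_count n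
  have hlb := sum_lower_bound n hn1
  have hS : (n:ℝ)^2 * c' ≤ (n:ℝ)^2 * (∑ d ∈ Icc 1 n, (μ d : ℝ) / d ^ 2) :=
    mul_le_mul_of_nonneg_left (le_of_lt h1) (by positivity)
  have herr : 2 * (n:ℝ) * (1 + Real.log n) ≤ (c' - c) * (n:ℝ)^2 := by
    calc 2 * (n:ℝ) * (1 + Real.log n) = (2 * (1 + Real.log n) / n) * (n:ℝ)^2 := by
          field_simp
      _ ≤ (c' - c) * (n:ℝ)^2 := mul_le_mul_of_nonneg_right (le_of_lt h2) (by positivity)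
  linarith [hmono, hcast ▸ hlb, hS, herr]
end
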